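/- arXiv:2601.11961 — 4 statements merged into one kernel-verified Lean document; each statement's English description precedes it below -/
import Mathlib

section
/- Let K be a number field, let 𝔣 be a nonzero integral ideal of O_K, let ε_1, …, ε_m be generators of the group O_K^{+×} of totally positive units, and set J(K) = Σ_{j=1}^m (ε_j − 1)O_K. Then O_𝔣^{+×} = O_K^{+×} if and only if 𝔣 divides J(K), i.e. if and only if J(K) ⊆ 𝔣. -/
open NumberField

/-- For a nonzero integral ideal `𝔣` of a number field `K` and generators
`ε_1, …, ε_m` of the group of totally positive units, setting `J(K) = Σ_j (ε_j - 1) O_K`,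
one has `O_𝔣^{+×} = O_K^{+×}` (i.e. every totally positive unit is `≡ 1 mod 𝔣`)
if and only if `𝔣` divides `J(K)`, i.e. `J(K) ⊆ 𝔣`. -/
theorem statement1
    (K : Type*) [Field K] [NumberField K]
    (P : Subgroup ((RingOfIntegers K)ˣ))
    (hP : ∀ u : (RingOfIntegers K)ˣ,
      u ∈ P ↔ ∀ σ : K →+* ℝ, 0 < σ ((u : RingOfIntegers K) : K))
    (𝔣 : Ideal (RingOfIntegers K)) (h𝔣 : 𝔣 ≠ ⊥)
    (m : ℕ) (ε : Fin m → (RingOfIntegers K)ˣ)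
    (hε : ∀ j, ε j ∈ P)
    (hgen : Subgroup.closure (Set.range ε) = P) :
    (∀ u ∈ P, ((u : (RingOfIntegers K)ˣ) : RingOfIntegers K) - 1 ∈ 𝔣) ↔
      Ideal.span (Set.range fun j =>
        ((ε j : (RingOfIntegers K)ˣ) : RingOfIntegers K) - 1) ≤ 𝔣 := by
  constructor
  · intro h
    rw [Ideal.span_le]
    rintro x ⟨j, rfl⟩
    exact h (ε j) (hε j)
  · intro h u hu
    have hspan : ∀ j, ((ε j : (RingOfIntegers K)ˣ) : RingOfIntegers K) - 1 ∈ 𝔣 := fun j =>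
      h (Ideal.subset_span ⟨j, rfl⟩)
    rw [← hgen] at hu
    induction hu using Subgroup.closure_induction with
    | mem x hx => obtain ⟨j, rfl⟩ := hx; exact hspan j
    | one => simp
    | mul x y hx hy ihx ihy =>
        have : ((x * y : (RingOfIntegers K)ˣ) : RingOfIntegers K) - 1
            = (x : RingOfIntegers K) * ((y : RingOfIntegers K) - 1)
              + ((x : RingOfIntegers K) - 1) := by
          push_cast; ring
        rw [this]; exact 𝔣.add_mem (𝔣.mul_mem_left _ ihy) ihx
    | inv x hx ihx =>
        have h1 : ((x⁻¹ : (RingOfIntegers K)ˣ) : RingOfIntegers K) * (x : RingOfIntegers K)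
            = 1 := x.inv_mul
        have : ((x⁻¹ : (RingOfIntegers K)ˣ) : RingOfIntegers K) - 1
            = -(((x⁻¹ : (RingOfIntegers K)ˣ) : RingOfIntegers K)
              * ((x : RingOfIntegers K) - 1)) := by
          linear_combination h1
        rw [this]; exact 𝔣.neg_mem (𝔣.mul_mem_left _ ihx)
end

section
/- Let K be a number field of degree n ≥ 3 with exactly one complex place (i.e. exactly one conjugate pair of complex embeddings and n − 2 real embeddings). Then there are only finitely many nonzero integral ideals 𝔣 of O_K such that every totally positive unit of O_K is congruent to 1 modulo 𝔣, i.e. such that O_𝔣^{+×} = O_K^{+×}. -/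
open NumberField

/-- Let `K` be a number field of degree `n ≥ 3` with exactly one complex
place (one conjugate pair of complex embeddings and `n - 2` real embeddings). Then there
are only finitely many nonzero integral ideals `𝔣` of `O_K` such that every totally
positive unit of `O_K` is congruent to `1` modulo `𝔣`. -/
theorem statement2
    (K : Type*) [Field K] [NumberField K]
    (n : ℕ) (hn : Module.finrank ℚ K = n) (hn3 : 3 ≤ n)
    (hcomplex : Nat.card {w : InfinitePlace K // w.IsComplex} = 1)
    (hreal : Nat.card {w : InfinitePlace K // w.IsReal} = n - 2)
    (P : Subgroup ((RingOfIntegers K)ˣ))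
    (hP : ∀ u : (RingOfIntegers K)ˣ,
      u ∈ P ↔ ∀ σ : K →+* ℝ, 0 < σ ((u : RingOfIntegers K) : K)) :
    {𝔣 : Ideal (RingOfIntegers K) | 𝔣 ≠ ⊥ ∧
      ∀ u ∈ P, ((u : (RingOfIntegers K)ˣ) : RingOfIntegers K) - 1 ∈ 𝔣}.Finite := by
  -- there is a complex place and a real place, hence two distinct infinite places
  have hc : Nonempty {w : InfinitePlace K // w.IsComplex} :=
    (Nat.card_pos_iff.mp (by omega)).1
  have hr : Nonempty {w : InfinitePlace K // w.IsReal} :=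
    (Nat.card_pos_iff.mp (by omega)).1
  obtain ⟨wc, hwc⟩ := hc
  obtain ⟨wr, hwr⟩ := hr
  have hne : wr ≠ wc := fun h =>
    (InfinitePlace.not_isReal_iff_isComplex.mpr hwc) (h ▸ hwr)
  -- a unit whose square is a nontrivial totally positive unit
  obtain ⟨u, hu⟩ := NumberField.Units.dirichletUnitTheorem.exists_unit K wc
  have hu0 : ((u : RingOfIntegers K) : K) ≠ 0 :=
    (RingOfIntegers.coe_ne_zero_iff).mpr u.ne_zero
  have hwrpos : 0 < wr ((u : RingOfIntegers K) : K) := InfinitePlace.pos_iff.mpr hu0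
  have hwrlt : wr ((u : RingOfIntegers K) : K) < 1 :=
    (Real.log_neg_iff hwrpos).mp (hu wr hne)
  -- the totally positive unit u^2
  have hxP : (u ^ 2) ∈ P := by
    rw [hP]
    intro σ
    have h2 : ((((u ^ 2 : (RingOfIntegers K)ˣ) : RingOfIntegers K)) : K)
        = (((u : RingOfIntegers K) : K)) ^ 2 := by push_cast; ring
    rw [h2, map_pow]
    exact pow_two_pos_of_ne_zero (fun h => hu0 (σ.injective (h.trans (map_zero σ).symm)))
  -- the element x = u^2 - 1 is nonzero
  set x : RingOfIntegers K := ((u ^ 2 : (RingOfIntegers K)ˣ) : RingOfIntegers K) - 1 with hxdef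
  have hx0 : x ≠ 0 := by
    intro h
    have hxe : ((u ^ 2 : (RingOfIntegers K)ˣ) : RingOfIntegers K) = 1 := by
      have := sub_eq_zero.mp h; simpa using this
    have hK : ((((u ^ 2 : (RingOfIntegers K)ˣ) : RingOfIntegers K)) : K) = 1 := by
      rw [hxe]; simp
    have h2 : ((((u ^ 2 : (RingOfIntegers K)ˣ) : RingOfIntegers K)) : K)
        = (((u : RingOfIntegers K) : K)) ^ 2 := by push_cast; ring
    have : wr ((((u : RingOfIntegers K) : K)) ^ 2) = 1 := by
      rw [← h2, hK]; simp
    rw [map_pow] at this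
    nlinarith [hwrpos, hwrlt]
  -- every ideal in the set divides the nonzero ideal span {x}
  have hdvd : {𝔣 : Ideal (RingOfIntegers K) | 𝔣 ≠ ⊥ ∧
      ∀ u ∈ P, ((u : (RingOfIntegers K)ˣ) : RingOfIntegers K) - 1 ∈ 𝔣} ⊆
      {𝔣 : Ideal (RingOfIntegers K) | 𝔣 ∣ Ideal.span {x}} := by
    rintro 𝔣 ⟨-, h𝔣⟩
    rw [Set.mem_setOf_eq, Ideal.dvd_iff_le, Ideal.span_le, Set.singleton_subset_iff]
    exact h𝔣 _ hxP
  have hspan0 : Ideal.span {x} ≠ 0 := by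
    simpa [Ideal.span_singleton_eq_bot] using hx0
  haveI : Fintype {𝔣 : Ideal (RingOfIntegers K) // 𝔣 ∣ Ideal.span {x}} :=
    UniqueFactorizationMonoid.fintypeSubtypeDvd _ hspan0
  have hfin : Finite {𝔣 : Ideal (RingOfIntegers K) // 𝔣 ∣ Ideal.span {x}} :=
    Finite.of_fintype _
  exact Set.Finite.subset (Set.finite_coe_iff.mp hfin) hdvd
end

section
/- Let r ≥ 0 be an integer, z ∈ ℂ, and τ_0, …, τ_r ∈ ℂ with Im(τ_j) > 0 for all 0 ≤ j ≤ r. Assume that exp(2πi(z + Σ_{j=0}^r m_jτ_j)) ≠ 1 for every m ∈ ℕ^{r+1}. Then the family indexed by m = (m_0, …, m_r) ∈ ℕ^{r+1} of factors (1 − exp(2πi(−z + Σ_{j=0}^r (m_j+1)τ_j))) · (1 − exp(2πi(z + Σ_{j=0}^r m_jτ_j)))^{(−1)^r} is multipliable, i.e. the infinite product defining the multiple elliptic Gamma function G_r(z, τ_0, …, τ_r) converges. -/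
set_option maxHeartbeats 1000000

open scoped Real

open Filter Complex in
/-- If all values are nonzero and `‖v i - 1‖` is eventually bounded by a summable
nonnegative family, then `v` is multipliable. -/
private lemma aux_multipliable {ι : Type*} {v : ι → ℂ} {g : ι → ℝ}
    (h0 : ∀ i, v i ≠ 0) (hg : Summable g)
    (hb : ∀ᶠ i in Filter.cofinite, ‖v i - 1‖ ≤ g i) : Multipliable v := by
  have hsmall : ∀ᶠ i in Filter.cofinite, ‖v i - 1‖ ≤ 1 / 2 := by
    filter_upwards [hb, hg.tendsto_cofinite_zero.eventually_lt_const (by norm_num : (0:ℝ) < 1/2)]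
      with i h1 h2
    exact h1.trans h2.le
  have hlog : Summable fun i => Complex.log (v i) := by
    refine Summable.of_norm_bounded_eventually (hg.mul_left (3 / 2)) ?_
    filter_upwards [hb, hsmall] with i h1 h2
    have hv : v i = 1 + (v i - 1) := by ring
    calc ‖Complex.log (v i)‖ = ‖Complex.log (1 + (v i - 1))‖ := by rw [← hv]
      _ ≤ 3 / 2 * ‖v i - 1‖ := Complex.norm_log_one_add_half_le_self h2
      _ ≤ 3 / 2 * g i := by linarith
  exact Complex.multipliable_of_summable_log hlog

/-- Summability of products of geometric terms over `Fin n → ℕ`. -/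
private lemma aux_geom : ∀ (n : ℕ) (ρ : Fin n → ℝ), (∀ j, 0 ≤ ρ j) → (∀ j, ρ j < 1) →
    Summable (fun m : Fin n → ℕ => ∏ j, ρ j ^ m j) := by
  intro n
  induction n with
  | zero =>
    intro ρ _ _
    exact Summable.of_finite
  | succ n ih =>
    intro ρ h0 h1
    have h1' : Summable (fun k : ℕ => ρ 0 ^ k) := summable_geometric_of_lt_one (h0 0) (h1 0)
    have h2' : Summable (fun m : Fin n → ℕ => ∏ j, ρ j.succ ^ m j) :=
      ih (fun j => ρ j.succ) (fun j => h0 _) (fun j => h1 _)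
    have key : Summable (fun p : ℕ × (Fin n → ℕ) =>
        (ρ 0 ^ p.1) * ∏ j, ρ j.succ ^ p.2 j) := by
      have ha : 0 ≤ (fun k : ℕ => ρ 0 ^ k) := fun k => pow_nonneg (h0 0) k
      have hb : 0 ≤ (fun m : Fin n → ℕ => ∏ j, ρ j.succ ^ m j) :=
        fun m => Finset.prod_nonneg fun j _ => pow_nonneg (h0 _) _
      simpa using Summable.mul_of_nonneg h1' h2' ha hb
    refine (Fin.consEquiv (fun _ : Fin (n + 1) => ℕ)).summable_iff.mp (key.congr fun p => ?_)
    show _ = ∏ j, ρ j ^ (Fin.cons p.1 p.2 : Fin (n+1) → ℕ) j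
    rw [Fin.prod_univ_succ]
    simp

/-- Summability of the norms of the exponential factors. -/
private lemma aux_exp (n : ℕ) (w : ℂ) (τ : Fin n → ℂ) (hτ : ∀ j, 0 < (τ j).im) :
    Summable (fun m : Fin n → ℕ =>
      ‖Complex.exp (2 * (π : ℂ) * Complex.I * (w + ∑ j, (m j : ℂ) * τ j))‖) := by
  have hρ0 : ∀ j, (0:ℝ) ≤ Real.exp (-(2 * π * (τ j).im)) := fun j => (Real.exp_pos _).le
  have hρ1 : ∀ j, Real.exp (-(2 * π * (τ j).im)) < 1 := fun j => by
    rw [Real.exp_lt_one_iff]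
    have h := hτ j
    nlinarith [Real.pi_pos]
  have hS := (aux_geom n (fun j => Real.exp (-(2 * π * (τ j).im))) hρ0 hρ1).mul_left
    (Real.exp (-(2 * π * w.im)))
  refine hS.congr fun m => ?_
  rw [Complex.norm_exp]
  have hre : (2 * (π : ℂ) * Complex.I * (w + ∑ j, (m j : ℂ) * τ j)).re
      = -(2 * π * w.im) + ∑ j, (m j : ℝ) * (-(2 * π * (τ j).im)) := by
    have h2 : (2 * (π : ℂ)) = ((2 * π : ℝ) : ℂ) := by push_cast; ring
    rw [h2, mul_assoc, Complex.re_ofReal_mul, Complex.I_mul_re]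
    simp only [Complex.add_im, Complex.im_sum, Complex.mul_im, Complex.natCast_re,
      Complex.natCast_im, zero_mul, add_zero]
    have hsum : ∑ j, (m j : ℝ) * -(2 * π * (τ j).im)
        = -(2 * π * ∑ j, (m j : ℝ) * (τ j).im) := by
      rw [Finset.mul_sum, ← Finset.sum_neg_distrib]
      exact Finset.sum_congr rfl fun j _ => by ring
    rw [hsum]
    ring
  rw [hre, Real.exp_add, Real.exp_sum]
  congr 1
  exact Finset.prod_congr rfl fun j _ => (Real.exp_nat_mul _ _).symm

open Filter in
/-- Convergence of the infinite product defining the multiple elliptic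
Gamma function `G_r`: for `z ∈ ℂ` and `τ_0, …, τ_r` in the upper half-plane such that no
factor of the product vanishes, the family of factors indexed by `m ∈ ℕ^{r+1}` is
multipliable. -/
theorem statement4
    (r : ℕ) (z : ℂ) (τ : Fin (r + 1) → ℂ)
    (hτ : ∀ j, 0 < (τ j).im)
    (hz : ∀ m : Fin (r + 1) → ℕ,
      Complex.exp (2 * (π : ℂ) * Complex.I * (z + ∑ j, (m j : ℂ) * τ j)) ≠ 1) :
    Multipliable (fun m : Fin (r + 1) → ℕ =>
      (1 - Complex.exp (2 * (π : ℂ) * Complex.I * (-z + ∑ j, ((m j : ℂ) + 1) * τ j))) *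
      (1 - Complex.exp (2 * (π : ℂ) * Complex.I * (z + ∑ j, (m j : ℂ) * τ j)))
        ^ ((-1 : ℤ) ^ r)) := by
  set a : (Fin (r+1) → ℕ) → ℂ := fun m =>
    Complex.exp (2 * (π : ℂ) * Complex.I * (-z + ∑ j, ((m j : ℂ) + 1) * τ j)) with ha
  set b : (Fin (r+1) → ℕ) → ℂ := fun m =>
    Complex.exp (2 * (π : ℂ) * Complex.I * (z + ∑ j, (m j : ℂ) * τ j)) with hb
  -- summability of ‖a‖ and ‖b‖
  have hsb : Summable fun m => ‖b m‖ := aux_exp (r+1) z τ hτ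
  have hsa : Summable fun m => ‖a m‖ := by
    refine (aux_exp (r+1) (-z + ∑ j, τ j) τ hτ).congr fun m => ?_
    have harg : (-z + ∑ j, τ j) + ∑ j, (m j : ℂ) * τ j
        = -z + ∑ j, ((m j : ℂ) + 1) * τ j := by
      rw [add_assoc, ← Finset.sum_add_distrib]
      congr 1
      exact Finset.sum_congr rfl fun j _ => by ring
    rw [harg]
  -- the second factor is nonzero
  have hBne : ∀ m, (1 : ℂ) - b m ≠ 0 := fun m => sub_ne_zero.mpr (hz m).symm
  by_cases hA : ∀ m, (1 : ℂ) - a m ≠ 0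
  · -- no factor vanishes: use log-summability
    have MA : Multipliable fun m => 1 - a m := by
      refine aux_multipliable hA hsa (Eventually.of_forall fun m => ?_)
      rw [sub_sub_cancel_left, norm_neg]
    have MB : Multipliable fun m => 1 - b m := by
      refine aux_multipliable hBne hsb (Eventually.of_forall fun m => ?_)
      rw [sub_sub_cancel_left, norm_neg]
    have MBinv : Multipliable fun m => ((1 : ℂ) - b m)⁻¹ := by
      refine aux_multipliable (fun m => inv_ne_zero (hBne m)) (hsb.mul_left 2) ?_
      have hsmall : ∀ᶠ m in Filter.cofinite, ‖b m‖ ≤ 1 / 2 :=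
        (hsb.tendsto_cofinite_zero.eventually_lt_const
          (by norm_num : (0:ℝ) < 1/2)).mono fun m h => h.le
      filter_upwards [hsmall] with m hm
      have hden : (1:ℝ) / 2 ≤ ‖(1:ℂ) - b m‖ := by
        calc (1:ℝ)/2 = 1 - 1/2 := by norm_num
          _ ≤ 1 - ‖b m‖ := by linarith
          _ = ‖(1:ℂ)‖ - ‖b m‖ := by rw [norm_one]
          _ ≤ ‖(1:ℂ) - b m‖ := norm_sub_norm_le _ _
      have heq : ((1 : ℂ) - b m)⁻¹ - 1 = b m / (1 - b m) := by
        rw [inv_eq_one_div, div_sub_one (hBne m)]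
        congr 1
        ring
      rw [heq, norm_div]
      rw [div_le_iff₀ (lt_of_lt_of_le (by norm_num) hden)]
      calc ‖b m‖ = 2 * ‖b m‖ * (1/2) := by ring
        _ ≤ 2 * ‖b m‖ * ‖(1:ℂ) - b m‖ :=
            mul_le_mul_of_nonneg_left hden (by positivity)
    rcases Nat.even_or_odd r with hr | hr
    · have hpow : ((-1 : ℤ) ^ r) = 1 := hr.neg_one_pow
      simp only [hpow, zpow_one]
      exact MA.mul MB
    · have hpow : ((-1 : ℤ) ^ r) = -1 := hr.neg_one_pow
      simp only [hpow, zpow_neg, zpow_one]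
      exact MA.mul MBinv
  · -- some factor vanishes: the product is trivially 0
    push_neg at hA
    obtain ⟨m₀, hm₀⟩ := hA
    refine ⟨0, ?_⟩
    rw [HasProd]
    refine Filter.Tendsto.congr' ?_ tendsto_const_nhds
    rw [Filter.EventuallyEq, SummationFilter.unconditional_filter, Filter.eventually_atTop]
    refine ⟨{m₀}, fun s hs => ?_⟩
    exact (Finset.prod_eq_zero (hs (Finset.mem_singleton_self m₀)) (by rw [hm₀, zero_mul])).symm
end

section
/- Let r ≥ 1 be an integer, z ∈ ℂ, and τ_0, …, τ_r ∈ ℂ with Im(τ_j) > 0 for all 0 ≤ j ≤ r, such that no factor of the defining products below vanishes. Then for each 0 ≤ k ≤ r the pseudo-periodicity relation holds: G_r(z + τ_k, τ_0, …, τ_r) = G_{r−1}(z, τ_0, …, τ̂_k, …, τ_r) · G_r(z, τ_0, …, τ_r), where τ̂_k means that the argument τ_k is omitted. -/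
open scoped Real
open Filter

set_option maxHeartbeats 1000000

/-- The multiple elliptic Gamma function `G_r`, defined by its infinite product over
`m ∈ ℕ^{r+1}`. -/
noncomputable def Gr (r : ℕ) (z : ℂ) (τ : Fin (r + 1) → ℂ) : ℂ :=
  ∏' m : Fin (r + 1) → ℕ,
    (1 - Complex.exp (2 * (π : ℂ) * Complex.I * (-z + ∑ j, ((m j : ℂ) + 1) * τ j))) *
    (1 - Complex.exp (2 * (π : ℂ) * Complex.I * (z + ∑ j, (m j : ℂ) * τ j)))
      ^ ((-1 : ℤ) ^ r)

open Filter

set_option maxHeartbeats 1000000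

section Aux

lemma piGeom : ∀ (n : ℕ) (q : Fin n → ℝ), (∀ j, 0 ≤ q j) → (∀ j, q j < 1) →
    Summable (fun m : Fin n → ℕ => ∏ j, q j ^ m j)
  | 0, q, _, _ => by
      have : (fun m : Fin 0 → ℕ => ∏ j, q j ^ m j) = fun _ => 1 := by
        funext m; simp
      rw [this]
      exact .of_finite
  | (n+1), q, h0, h1 => by
      have hrec := piGeom n (fun j => q j.succ) (fun j => h0 _) (fun j => h1 _)
      have hg : Summable (fun m : ℕ => q 0 ^ m) :=
        summable_geometric_of_lt_one (h0 0) (h1 0)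
      have hmul := Summable.mul_of_nonneg (f := fun m : ℕ => q 0 ^ m)
        (g := fun x : Fin n → ℕ => ∏ j, q j.succ ^ x j) hg hrec
        (fun m => pow_nonneg (h0 0) m)
        (fun x => Finset.prod_nonneg fun j _ => pow_nonneg (h0 _) _)
      refine ((Fin.consEquiv (fun _ : Fin (n+1) => ℕ)).summable_iff).mp (hmul.congr fun p => ?_)
      rw [Function.comp_apply, Fin.prod_univ_succ]
      simp [Fin.consEquiv]

lemma re_two_pi_I_mul (t : ℂ) : (2 * (π : ℂ) * Complex.I * t).re = -(2 * π) * t.im := by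
  simp only [Complex.mul_re, Complex.mul_im, Complex.I_re, Complex.I_im, Complex.ofReal_re,
    Complex.ofReal_im, Complex.re_ofNat, Complex.im_ofNat]
  ring

lemma absQ_lt_one {t : ℂ} (ht : 0 < t.im) :
    norm (Complex.exp (2 * (π : ℂ) * Complex.I * t)) < 1 := by
  rw [Complex.norm_exp, Real.exp_lt_one_iff, re_two_pi_I_mul]
  nlinarith [Real.pi_pos, ht]

lemma summable1 (N : ℕ) (w : ℂ) (t : Fin N → ℂ) (ht : ∀ j, 0 < (t j).im) (d : Fin N → ℕ) :
    Summable fun x : Fin N → ℕ =>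
      norm (Complex.exp (2 * (π : ℂ) * Complex.I * (w + ∑ j, ((x j + d j : ℕ) : ℂ) * t j))) := by
  set Q : Fin N → ℝ := fun j => norm (Complex.exp (2 * (π : ℂ) * Complex.I * t j)) with hQ
  have hQ0 : ∀ j, 0 ≤ Q j := fun j => norm_nonneg _
  have hQ1 : ∀ j, Q j < 1 := fun j => absQ_lt_one (ht j)
  have key : ∀ x : Fin N → ℕ,
      norm (Complex.exp (2 * (π : ℂ) * Complex.I * (w + ∑ j, ((x j + d j : ℕ) : ℂ) * t j)))
        = norm (Complex.exp (2 * (π : ℂ) * Complex.I * w)) * ∏ j, Q j ^ (x j + d j) := by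
    intro x
    rw [mul_add, Complex.exp_add, norm_mul]
    congr 1
    rw [Finset.mul_sum, Complex.exp_sum, norm_prod]
    refine Finset.prod_congr rfl fun j _ => ?_
    rw [show 2 * (π : ℂ) * Complex.I * (((x j + d j : ℕ) : ℂ) * t j)
        = ((x j + d j : ℕ) : ℂ) * (2 * (π : ℂ) * Complex.I * t j) by ring,
      Complex.exp_nat_mul, norm_pow]
  refine Summable.of_nonneg_of_le (fun x => norm_nonneg _)
    (fun x => ?_) (((piGeom N Q hQ0 hQ1)).mul_left
      (norm (Complex.exp (2 * (π : ℂ) * Complex.I * w))))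
  rw [key x]
  refine mul_le_mul_of_nonneg_left ?_ (norm_nonneg _)
  refine Finset.prod_le_prod (fun j _ => pow_nonneg (hQ0 j) _) (fun j _ => ?_)
  exact pow_le_pow_of_le_one (hQ0 j) (hQ1 j).le (Nat.le_add_right _ _)

lemma summable2 (N : ℕ) (w t0 : ℂ) (t : Fin N → ℂ) (h0 : 0 < t0.im) (ht : ∀ j, 0 < (t j).im)
    (d0 : ℕ) (d : Fin N → ℕ) :
    Summable fun p : ℕ × (Fin N → ℕ) =>
      norm (Complex.exp (2 * (π : ℂ) * Complex.I *
        (w + ((p.1 + d0 : ℕ) : ℂ) * t0 + ∑ j, ((p.2 j + d j : ℕ) : ℂ) * t j))) := by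
  set Q0 : ℝ := norm (Complex.exp (2 * (π : ℂ) * Complex.I * t0)) with hQ
  have hQ0 : (0:ℝ) ≤ Q0 := norm_nonneg _
  have hQ1 : Q0 < 1 := absQ_lt_one h0
  have key : ∀ p : ℕ × (Fin N → ℕ),
      norm (Complex.exp (2 * (π : ℂ) * Complex.I *
          (w + ((p.1 + d0 : ℕ) : ℂ) * t0 + ∑ j, ((p.2 j + d j : ℕ) : ℂ) * t j)))
        = Q0 ^ (p.1 + d0) *
          norm (Complex.exp (2 * (π : ℂ) * Complex.I *
            (w + ∑ j, ((p.2 j + d j : ℕ) : ℂ) * t j))) := by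
    intro p
    rw [show 2 * (π : ℂ) * Complex.I *
          (w + ((p.1 + d0 : ℕ) : ℂ) * t0 + ∑ j, ((p.2 j + d j : ℕ) : ℂ) * t j)
        = ((p.1 + d0 : ℕ) : ℂ) * (2 * (π : ℂ) * Complex.I * t0) +
          2 * (π : ℂ) * Complex.I * (w + ∑ j, ((p.2 j + d j : ℕ) : ℂ) * t j) by push_cast; ring,
      Complex.exp_add, norm_mul, Complex.exp_nat_mul, norm_pow]
  have hmul := Summable.mul_of_nonneg (f := fun m : ℕ => Q0 ^ m)
    (g := fun x : Fin N → ℕ =>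
      norm (Complex.exp (2 * (π : ℂ) * Complex.I * (w + ∑ j, ((x j + d j : ℕ) : ℂ) * t j))))
    (summable_geometric_of_lt_one hQ0 hQ1) (summable1 N w t ht d)
    (fun m => pow_nonneg hQ0 m) (fun x => norm_nonneg _)
  refine Summable.of_nonneg_of_le (fun p => norm_nonneg _) (fun p => ?_) hmul
  rw [key p]
  exact mul_le_mul_of_nonneg_right
    (pow_le_pow_of_le_one hQ0 hQ1.le (Nat.le_add_right _ _)) (norm_nonneg _)

lemma summable_log_one_sub {ι : Type*} (u : ι → ℂ) (hu : Summable fun i => norm (u i)) :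
    Summable fun i => Complex.log (1 - u i) := by
  have h2 : Tendsto (fun i => norm (u i)) cofinite (nhds 0) := hu.tendsto_cofinite_zero
  have hev : ∀ᶠ i in cofinite, norm (u i) ≤ 1 / 2 :=
    h2.eventually_le_const (by norm_num)
  refine (hu.mul_left (3 / 2)).of_norm_bounded_eventually ?_
  filter_upwards [hev] with i hi
  have := Complex.norm_log_one_add_half_le_self (z := -u i) (by simpa using hi)
  simpa [sub_eq_add_neg] using this

lemma hasProd_one_sub {ι : Type*} (u : ι → ℂ) (hu : Summable fun i => norm (u i))
    (h0 : ∀ i, 1 - u i ≠ 0) :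
    HasProd (fun i => 1 - u i) (Complex.exp (∑' i, Complex.log (1 - u i))) := by
  have hlog := summable_log_one_sub u hu
  have h := hlog.hasSum.cexp
  have he : (Complex.exp ∘ fun i => Complex.log (1 - u i)) = fun i => 1 - u i :=
    funext fun i => Complex.exp_log (h0 i)
  rwa [he] at h

lemma HasProd.inv₀' {ι : Type*} {f : ι → ℂ} {a : ℂ} (h : HasProd f a) (ha : a ≠ 0) :
    HasProd (fun i => (f i)⁻¹) a⁻¹ := by
  have h' : Tendsto (fun s : Finset ι => ∏ i ∈ s, f i) atTop (nhds a) := h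
  have := h'.inv₀ ha
  simpa [HasProd, Finset.prod_inv_distrib] using this

lemma shift_inj (ι : Type*) : Function.Injective (fun p : ℕ × ι => ((p.1 + 1, p.2) : ℕ × ι)) := by
  intro p q h
  simp only [Prod.mk.injEq, add_left_inj] at h
  exact Prod.ext h.1 h.2

lemma split_sum {ι : Type*} (L : ℕ × ι → ℂ) (hL : Summable L) :
    ∑' p, L p = (∑' x, L (0, x)) + ∑' p : ℕ × ι, L (p.1 + 1, p.2) := by
  have hshift : Summable (fun p : ℕ × ι => L (p.1 + 1, p.2)) :=
    hL.comp_injective (shift_inj ι)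
  have hfib : ∀ n, Summable fun x : ι => L (n, x) := fun n =>
    hL.comp_injective (i := fun x : ι => ((n, x) : ℕ × ι)) (fun x y h => by
      simpa [Prod.ext_iff] using h)
  have hfib' : ∀ n, Summable fun x : ι => L (n + 1, x) := fun n => hfib (n + 1)
  have hsum : Summable (fun n : ℕ => ∑' x : ι, L (n + 1, x)) := by
    have := hshift.prod
    simpa using this
  rw [Summable.tsum_prod' hL hfib, tsum_eq_zero_add' hsum, ← Summable.tsum_prod' hshift hfib']

end Aux

lemma sum_insertNth {n : ℕ} (k : Fin (n + 1)) (v : Fin (n + 1) → ℂ) (a : ℕ) (x : Fin n → ℕ) :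
    ∑ j, ((Fin.insertNth (α := fun _ => ℕ) k a x j : ℕ) : ℂ) * v j
      = (a : ℂ) * v k + ∑ j, ((x j : ℕ) : ℂ) * v (k.succAbove j) := by
  rw [Fin.sum_univ_succAbove (fun j => ((Fin.insertNth (α := fun _ => ℕ) k a x j : ℕ) : ℂ) * v j) k]
  simp

/-- Pseudo-periodicity of the multiple elliptic Gamma functions (stated
for `G_{r+1}`, i.e. for degree `≥ 1`): for parameters in the upper half-plane such that
no factor of the defining products vanishes,
`G_{r+1}(z + τ_k, τ) = G_r(z, τ with τ_k omitted) ⬝ G_{r+1}(z, τ)`.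
The two non-vanishing hypotheses say exactly that no factor of the three products
involved vanishes. -/
theorem statement6
    (r : ℕ) (z : ℂ) (τ : Fin (r + 2) → ℂ)
    (hτ : ∀ j, 0 < (τ j).im)
    (k : Fin (r + 2))
    (hA : ∀ c : Fin (r + 2) → ℕ,
      1 - Complex.exp (2 * (π : ℂ) * Complex.I * (z + ∑ j, (c j : ℂ) * τ j)) ≠ 0)
    (hB : ∀ c : Fin (r + 2) → ℕ, (∀ j, j ≠ k → 1 ≤ c j) →
      1 - Complex.exp (2 * (π : ℂ) * Complex.I * (-z + ∑ j, (c j : ℂ) * τ j)) ≠ 0) :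
    Gr (r + 1) (z + τ k) τ = Gr r z (fun j => τ (k.succAbove j)) * Gr (r + 1) z τ := by
  classical
  -- nonvanishing of the basic factors
  have hb : ∀ (n : ℕ) (x : Fin (r + 1) → ℕ),
      1 - Complex.exp (2 * (π : ℂ) * Complex.I *
        (z + (n : ℂ) * τ k + ∑ j, ((x j : ℕ) : ℂ) * τ (k.succAbove j))) ≠ 0 := by
    intro n x
    have h := hA (k.insertNth n x)
    rw [sum_insertNth, ← add_assoc] at h
    exact h
  have ha : ∀ (n : ℕ) (x : Fin (r + 1) → ℕ),
      1 - Complex.exp (2 * (π : ℂ) * Complex.I *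
        (-z + (n : ℂ) * τ k + ∑ j, ((x j + 1 : ℕ) : ℂ) * τ (k.succAbove j))) ≠ 0 := by
    intro n x
    have h := hB (k.insertNth n (fun j => x j + 1)) ?_
    · rw [sum_insertNth, ← add_assoc] at h
      exact h
    · intro j hj
      obtain ⟨i, rfl⟩ := Fin.exists_succAbove_eq hj
      rw [Fin.insertNth_apply_succAbove]
      exact Nat.le_add_left 1 _
  have hb0 : ∀ x : Fin (r + 1) → ℕ,
      1 - Complex.exp (2 * (π : ℂ) * Complex.I *
        (z + ∑ j, ((x j : ℕ) : ℂ) * τ (k.succAbove j))) ≠ 0 := by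
    intro x
    have h := hb 0 x
    simpa using h
  have ha0 : ∀ x : Fin (r + 1) → ℕ,
      1 - Complex.exp (2 * (π : ℂ) * Complex.I *
        (-z + ∑ j, ((x j + 1 : ℕ) : ℂ) * τ (k.succAbove j))) ≠ 0 := by
    intro x
    have h := ha 0 x
    simpa using h
  -- summability of absolute values
  have hsa : Summable fun p : ℕ × (Fin (r + 1) → ℕ) =>
      norm (Complex.exp (2 * (π : ℂ) * Complex.I *
        (-z + ((p.1 : ℕ) : ℂ) * τ k + ∑ j, ((p.2 j + 1 : ℕ) : ℂ) * τ (k.succAbove j)))) :=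
    summable2 (r + 1) (-z) (τ k) (fun j => τ (k.succAbove j)) (hτ k) (fun j => hτ _) 0 (fun _ => 1)
  have hsas : Summable fun p : ℕ × (Fin (r + 1) → ℕ) =>
      norm (Complex.exp (2 * (π : ℂ) * Complex.I *
        (-z + ((p.1 + 1 : ℕ) : ℂ) * τ k + ∑ j, ((p.2 j + 1 : ℕ) : ℂ) * τ (k.succAbove j)))) :=
    summable2 (r + 1) (-z) (τ k) (fun j => τ (k.succAbove j)) (hτ k) (fun j => hτ _) 1 (fun _ => 1)
  have hsb : Summable fun p : ℕ × (Fin (r + 1) → ℕ) =>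
      norm (Complex.exp (2 * (π : ℂ) * Complex.I *
        (z + ((p.1 : ℕ) : ℂ) * τ k + ∑ j, ((p.2 j : ℕ) : ℂ) * τ (k.succAbove j)))) :=
    summable2 (r + 1) z (τ k) (fun j => τ (k.succAbove j)) (hτ k) (fun j => hτ _) 0 (fun _ => 0)
  have hsbs : Summable fun p : ℕ × (Fin (r + 1) → ℕ) =>
      norm (Complex.exp (2 * (π : ℂ) * Complex.I *
        (z + ((p.1 + 1 : ℕ) : ℂ) * τ k + ∑ j, ((p.2 j : ℕ) : ℂ) * τ (k.succAbove j)))) :=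
    summable2 (r + 1) z (τ k) (fun j => τ (k.succAbove j)) (hτ k) (fun j => hτ _) 1 (fun _ => 0)
  have hsa0 : Summable fun x : Fin (r + 1) → ℕ =>
      norm (Complex.exp (2 * (π : ℂ) * Complex.I *
        (-z + ∑ j, ((x j + 1 : ℕ) : ℂ) * τ (k.succAbove j)))) :=
    summable1 (r + 1) (-z) (fun j => τ (k.succAbove j)) (fun j => hτ _) (fun _ => 1)
  have hsb0 : Summable fun x : Fin (r + 1) → ℕ =>
      norm (Complex.exp (2 * (π : ℂ) * Complex.I *
        (z + ∑ j, ((x j : ℕ) : ℂ) * τ (k.succAbove j)))) :=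
    summable1 (r + 1) z (fun j => τ (k.succAbove j)) (fun j => hτ _) (fun _ => 0)
  -- the six HasProd facts
  have Ha := hasProd_one_sub _ hsa (fun p => ha p.1 p.2)
  have Has := hasProd_one_sub _ hsas (fun p => ha (p.1 + 1) p.2)
  have Hb := hasProd_one_sub _ hsb (fun p => hb p.1 p.2)
  have Hbs := hasProd_one_sub _ hsbs (fun p => hb (p.1 + 1) p.2)
  have Ha0 := hasProd_one_sub _ hsa0 ha0
  have Hb0 := hasProd_one_sub _ hsb0 hb0
  -- splitting of the log-sums
  have splitA : (∑' p : ℕ × (Fin (r + 1) → ℕ), Complex.log (1 - Complex.exp (2 * (π : ℂ) * Complex.I *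
        (-z + ((p.1 : ℕ) : ℂ) * τ k + ∑ j, ((p.2 j + 1 : ℕ) : ℂ) * τ (k.succAbove j)))))
      = (∑' x : Fin (r + 1) → ℕ, Complex.log (1 - Complex.exp (2 * (π : ℂ) * Complex.I *
          (-z + ∑ j, ((x j + 1 : ℕ) : ℂ) * τ (k.succAbove j)))))
        + ∑' p : ℕ × (Fin (r + 1) → ℕ), Complex.log (1 - Complex.exp (2 * (π : ℂ) * Complex.I *
          (-z + ((p.1 + 1 : ℕ) : ℂ) * τ k + ∑ j, ((p.2 j + 1 : ℕ) : ℂ) * τ (k.succAbove j)))) := by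
    rw [split_sum _ (summable_log_one_sub _ hsa)]
    congr 1
    refine tsum_congr fun x => ?_
    norm_num
  have splitB : (∑' p : ℕ × (Fin (r + 1) → ℕ), Complex.log (1 - Complex.exp (2 * (π : ℂ) * Complex.I *
        (z + ((p.1 : ℕ) : ℂ) * τ k + ∑ j, ((p.2 j : ℕ) : ℂ) * τ (k.succAbove j)))))
      = (∑' x : Fin (r + 1) → ℕ, Complex.log (1 - Complex.exp (2 * (π : ℂ) * Complex.I *
          (z + ∑ j, ((x j : ℕ) : ℂ) * τ (k.succAbove j)))))
        + ∑' p : ℕ × (Fin (r + 1) → ℕ), Complex.log (1 - Complex.exp (2 * (π : ℂ) * Complex.I *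
          (z + ((p.1 + 1 : ℕ) : ℂ) * τ k + ∑ j, ((p.2 j : ℕ) : ℂ) * τ (k.succAbove j)))) := by
    rw [split_sum _ (summable_log_one_sub _ hsb)]
    congr 1
    refine tsum_congr fun x => ?_
    norm_num

  -- abbreviate the six log-sums
  set Sa := ∑' p : ℕ × (Fin (r + 1) → ℕ), Complex.log (1 - Complex.exp (2 * (π : ℂ) * Complex.I *
      (-z + ((p.1 : ℕ) : ℂ) * τ k + ∑ j, ((p.2 j + 1 : ℕ) : ℂ) * τ (k.succAbove j)))) with hSa
  set Sas := ∑' p : ℕ × (Fin (r + 1) → ℕ), Complex.log (1 - Complex.exp (2 * (π : ℂ) * Complex.I *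
      (-z + ((p.1 + 1 : ℕ) : ℂ) * τ k + ∑ j, ((p.2 j + 1 : ℕ) : ℂ) * τ (k.succAbove j)))) with hSas
  set Sb := ∑' p : ℕ × (Fin (r + 1) → ℕ), Complex.log (1 - Complex.exp (2 * (π : ℂ) * Complex.I *
      (z + ((p.1 : ℕ) : ℂ) * τ k + ∑ j, ((p.2 j : ℕ) : ℂ) * τ (k.succAbove j)))) with hSb
  set Sbs := ∑' p : ℕ × (Fin (r + 1) → ℕ), Complex.log (1 - Complex.exp (2 * (π : ℂ) * Complex.I *
      (z + ((p.1 + 1 : ℕ) : ℂ) * τ k + ∑ j, ((p.2 j : ℕ) : ℂ) * τ (k.succAbove j)))) with hSbs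
  set Sa0 := ∑' x : Fin (r + 1) → ℕ, Complex.log (1 - Complex.exp (2 * (π : ℂ) * Complex.I *
      (-z + ∑ j, ((x j + 1 : ℕ) : ℂ) * τ (k.succAbove j)))) with hSa0
  set Sb0 := ∑' x : Fin (r + 1) → ℕ, Complex.log (1 - Complex.exp (2 * (π : ℂ) * Complex.I *
      (z + ∑ j, ((x j : ℕ) : ℂ) * τ (k.succAbove j)))) with hSb0
  simp only [Gr]
  rcases Nat.even_or_odd r with hr | hr
  · -- r even
    have hr1 : ((-1 : ℤ) ^ r) = 1 := hr.neg_one_pow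
    have hr2 : ((-1 : ℤ) ^ (r + 1)) = -1 := (hr.add_one).neg_one_pow
    have HW : HasProd (fun m : Fin (r + 1 + 1) → ℕ =>
        (1 - Complex.exp (2 * (π : ℂ) * Complex.I * (-(z + τ k) + ∑ j, ((m j : ℂ) + 1) * τ j))) *
        (1 - Complex.exp (2 * (π : ℂ) * Complex.I * (z + τ k + ∑ j, (m j : ℂ) * τ j)))
          ^ ((-1 : ℤ) ^ (r + 1)))
        (Complex.exp Sa * (Complex.exp Sbs)⁻¹) := by
      rw [← Equiv.hasProd_iff (Fin.insertNthEquiv (fun _ : Fin (r + 2) => ℕ) k)]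
      convert Ha.mul (Hbs.inv₀' (Complex.exp_ne_zero _)) using 1
      funext p
      simp only [Function.comp_apply, Fin.insertNthEquiv_apply, hr2, zpow_neg_one]
      rw [Fin.sum_univ_succAbove
          (fun j => (((Fin.insertNth (α := fun _ => ℕ) k p.1 p.2) j : ℂ) + 1) * τ j) k,
        Fin.sum_univ_succAbove
          (fun j => ((Fin.insertNth (α := fun _ => ℕ) k p.1 p.2) j : ℂ) * τ j) k]
      simp only [Fin.insertNth_apply_same, Fin.insertNth_apply_succAbove]
      push_cast
      simp only [add_mul, one_mul]
      try ring_nf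
    have HZ : HasProd (fun m : Fin (r + 1 + 1) → ℕ =>
        (1 - Complex.exp (2 * (π : ℂ) * Complex.I * (-z + ∑ j, ((m j : ℂ) + 1) * τ j))) *
        (1 - Complex.exp (2 * (π : ℂ) * Complex.I * (z + ∑ j, (m j : ℂ) * τ j)))
          ^ ((-1 : ℤ) ^ (r + 1)))
        (Complex.exp Sas * (Complex.exp Sb)⁻¹) := by
      rw [← Equiv.hasProd_iff (Fin.insertNthEquiv (fun _ : Fin (r + 2) => ℕ) k)]
      convert Has.mul (Hb.inv₀' (Complex.exp_ne_zero _)) using 1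
      funext p
      simp only [Function.comp_apply, Fin.insertNthEquiv_apply, hr2, zpow_neg_one]
      rw [Fin.sum_univ_succAbove
          (fun j => (((Fin.insertNth (α := fun _ => ℕ) k p.1 p.2) j : ℂ) + 1) * τ j) k,
        Fin.sum_univ_succAbove
          (fun j => ((Fin.insertNth (α := fun _ => ℕ) k p.1 p.2) j : ℂ) * τ j) k]
      simp only [Fin.insertNth_apply_same, Fin.insertNth_apply_succAbove]
      push_cast
      simp only [add_mul, one_mul]
      try ring_nf
    have H1 : HasProd (fun x : Fin (r + 1) → ℕ =>
        (1 - Complex.exp (2 * (π : ℂ) * Complex.I *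
          (-z + ∑ j, ((x j : ℂ) + 1) * τ (k.succAbove j)))) *
        (1 - Complex.exp (2 * (π : ℂ) * Complex.I *
          (z + ∑ j, (x j : ℂ) * τ (k.succAbove j)))) ^ ((-1 : ℤ) ^ r))
        (Complex.exp Sa0 * Complex.exp Sb0) := by
      convert Ha0.mul Hb0 using 1
      funext x
      simp only [hr1, zpow_one]
      push_cast
      simp only [add_mul, one_mul]
      try ring_nf
    rw [HW.tprod_eq, HZ.tprod_eq, H1.tprod_eq, splitA, splitB, Complex.exp_add,
      Complex.exp_add, mul_inv]
    have e1 := Complex.exp_ne_zero Sb0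
    have e2 := Complex.exp_ne_zero Sbs
    field_simp
  · -- r odd
    have hr1 : ((-1 : ℤ) ^ r) = -1 := hr.neg_one_pow
    have hr2 : ((-1 : ℤ) ^ (r + 1)) = 1 := (hr.add_one).neg_one_pow
    have HW : HasProd (fun m : Fin (r + 1 + 1) → ℕ =>
        (1 - Complex.exp (2 * (π : ℂ) * Complex.I * (-(z + τ k) + ∑ j, ((m j : ℂ) + 1) * τ j))) *
        (1 - Complex.exp (2 * (π : ℂ) * Complex.I * (z + τ k + ∑ j, (m j : ℂ) * τ j)))
          ^ ((-1 : ℤ) ^ (r + 1)))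
        (Complex.exp Sa * Complex.exp Sbs) := by
      rw [← Equiv.hasProd_iff (Fin.insertNthEquiv (fun _ : Fin (r + 2) => ℕ) k)]
      convert Ha.mul Hbs using 1
      funext p
      simp only [Function.comp_apply, Fin.insertNthEquiv_apply, hr2, zpow_one]
      rw [Fin.sum_univ_succAbove
          (fun j => (((Fin.insertNth (α := fun _ => ℕ) k p.1 p.2) j : ℂ) + 1) * τ j) k,
        Fin.sum_univ_succAbove
          (fun j => ((Fin.insertNth (α := fun _ => ℕ) k p.1 p.2) j : ℂ) * τ j) k]
      simp only [Fin.insertNth_apply_same, Fin.insertNth_apply_succAbove]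
      push_cast
      simp only [add_mul, one_mul]
      try ring_nf
    have HZ : HasProd (fun m : Fin (r + 1 + 1) → ℕ =>
        (1 - Complex.exp (2 * (π : ℂ) * Complex.I * (-z + ∑ j, ((m j : ℂ) + 1) * τ j))) *
        (1 - Complex.exp (2 * (π : ℂ) * Complex.I * (z + ∑ j, (m j : ℂ) * τ j)))
          ^ ((-1 : ℤ) ^ (r + 1)))
        (Complex.exp Sas * Complex.exp Sb) := by
      rw [← Equiv.hasProd_iff (Fin.insertNthEquiv (fun _ : Fin (r + 2) => ℕ) k)]
      convert Has.mul Hb using 1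
      funext p
      simp only [Function.comp_apply, Fin.insertNthEquiv_apply, hr2, zpow_one]
      rw [Fin.sum_univ_succAbove
          (fun j => (((Fin.insertNth (α := fun _ => ℕ) k p.1 p.2) j : ℂ) + 1) * τ j) k,
        Fin.sum_univ_succAbove
          (fun j => ((Fin.insertNth (α := fun _ => ℕ) k p.1 p.2) j : ℂ) * τ j) k]
      simp only [Fin.insertNth_apply_same, Fin.insertNth_apply_succAbove]
      push_cast
      simp only [add_mul, one_mul]
      try ring_nf
    have H1 : HasProd (fun x : Fin (r + 1) → ℕ =>
        (1 - Complex.exp (2 * (π : ℂ) * Complex.I *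
          (-z + ∑ j, ((x j : ℂ) + 1) * τ (k.succAbove j)))) *
        (1 - Complex.exp (2 * (π : ℂ) * Complex.I *
          (z + ∑ j, (x j : ℂ) * τ (k.succAbove j)))) ^ ((-1 : ℤ) ^ r))
        (Complex.exp Sa0 * (Complex.exp Sb0)⁻¹) := by
      convert Ha0.mul (Hb0.inv₀' (Complex.exp_ne_zero _)) using 1
      funext x
      simp only [hr1, zpow_neg_one]
      push_cast
      simp only [add_mul, one_mul]
      try ring_nf
    rw [HW.tprod_eq, HZ.tprod_eq, H1.tprod_eq, splitA, splitB, Complex.exp_add,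
      Complex.exp_add]
    have e1 := Complex.exp_ne_zero Sb0
    field_simp
end
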